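/- Let $G$ be a graph on vertices $\{v_1,\ldots,v_n\}$ where $v_{n-1}=v$ and $v_n=v'$ are true twins, let $G^* = G - v'$, and let $M^* \in S(G^*)$ satisfy $m^*_{vv} = \lambda$ for some nonzero real $\lambda$. Define the symmetric matrix $M$ by $m_{uw} = m^*_{uw}$ for $u,w \notin \{v,v'\}$, $m_{uv} = m_{uv'} = m^*_{uv}/\sqrt{2}$ for $u \notin \{v,v'\}$, $m_{vv} = m_{v'v'} = 0$, and $m_{vv'} = \lambda$. Then $M \in S(G)$ and the set of eigenvalues of $M$ equals the set of eigenvalues of $M^*$ together with $-\lambda$. -/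

import Mathlib

open Matrix

noncomputable def twinP (n : ℕ) : Matrix (Fin (n+2)) (Fin (n+2)) ℝ :=
  Matrix.of fun i j =>
    if i = (Fin.last n).castSucc then
      (if j = (Fin.last n).castSucc ∨ j = Fin.last (n+1) then (Real.sqrt 2)⁻¹ else 0)
    else if i = Fin.last (n+1) then
      (if j = (Fin.last n).castSucc then (Real.sqrt 2)⁻¹
        else if j = Fin.last (n+1) then -(Real.sqrt 2)⁻¹ else 0)
    else if j = i then 1 else 0

noncomputable def twinN (n : ℕ) (A : Matrix (Fin (n+1)) (Fin (n+1)) ℝ) (l : ℝ) :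
    Matrix (Fin (n+2)) (Fin (n+2)) ℝ :=
  (Matrix.fromBlocks A 0 0 (Matrix.of fun _ _ : Fin 1 => -l)).submatrix
    (finSumFinEquiv (m := n+1) (n := 1)).symm (finSumFinEquiv (m := n+1) (n := 1)).symm

lemma finSymm_castSucc (n : ℕ) (k : Fin (n+1)) :
    (finSumFinEquiv (m := n+1) (n := 1)).symm k.castSucc = Sum.inl k :=
  finSumFinEquiv_symm_apply_castAdd k

lemma twinN_cc {n : ℕ} (A : Matrix (Fin (n+1)) (Fin (n+1)) ℝ) (l : ℝ) (a b : Fin (n+1)) :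
    twinN n A l a.castSucc b.castSucc = A a b := by
  simp [twinN, finSymm_castSucc]

lemma twinN_cl {n : ℕ} (A : Matrix (Fin (n+1)) (Fin (n+1)) ℝ) (l : ℝ) (a : Fin (n+1)) :
    twinN n A l a.castSucc (Fin.last (n+1)) = 0 := by
  simp [twinN, finSymm_castSucc]

lemma twinN_lc {n : ℕ} (A : Matrix (Fin (n+1)) (Fin (n+1)) ℝ) (l : ℝ) (a : Fin (n+1)) :
    twinN n A l (Fin.last (n+1)) a.castSucc = 0 := by
  simp [twinN, finSymm_castSucc]

lemma twinN_ll {n : ℕ} (A : Matrix (Fin (n+1)) (Fin (n+1)) ℝ) (l : ℝ) :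
    twinN n A l (Fin.last (n+1)) (Fin.last (n+1)) = -l := by
  simp [twinN]

lemma sumsplit {n : ℕ} (f : Fin (n+2) → ℝ) :
    (∑ k, f k) = (∑ u : Fin n, f u.castSucc.castSucc) + f ((Fin.last n).castSucc)
      + f (Fin.last (n+1)) := by
  rw [Fin.sum_univ_castSucc, Fin.sum_univ_castSucc]

lemma ne_uV {n : ℕ} (u : Fin n) : u.castSucc.castSucc ≠ (Fin.last n).castSucc := by
  have := u.isLt; simp [Fin.ext_iff]; omega

lemma ne_uV' {n : ℕ} (u : Fin n) : u.castSucc.castSucc ≠ Fin.last (n+1) := by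
  have := u.isLt; simp [Fin.ext_iff]; omega

lemma ne_VV' (n : ℕ) : ((Fin.last n).castSucc : Fin (n+2)) ≠ Fin.last (n+1) := by
  simp [Fin.ext_iff]

lemma ne_cl {n : ℕ} (x : Fin n) : x.castSucc ≠ Fin.last n := (Fin.castSucc_lt_last x).ne

lemma twinP_mul_u {n : ℕ} (X : Matrix (Fin (n+2)) (Fin (n+2)) ℝ) (u : Fin n) (j : Fin (n+2)) :
    (twinP n * X) u.castSucc.castSucc j = X u.castSucc.castSucc j := by
  rw [Matrix.mul_apply, sumsplit]
  simp [twinP, ne_uV, ne_uV', ne_cl, (ne_uV u).symm, (ne_uV' u).symm, Fin.castSucc_inj,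
    (ne_VV' n).symm, ne_VV' n]

lemma twinP_mul_V {n : ℕ} (X : Matrix (Fin (n+2)) (Fin (n+2)) ℝ) (j : Fin (n+2)) :
    (twinP n * X) ((Fin.last n).castSucc) j
      = (Real.sqrt 2)⁻¹ * X ((Fin.last n).castSucc) j
        + (Real.sqrt 2)⁻¹ * X (Fin.last (n+1)) j := by
  rw [Matrix.mul_apply, sumsplit]
  simp [twinP, ne_uV, ne_uV', ne_cl, ne_VV' n]

lemma twinP_mul_V' {n : ℕ} (X : Matrix (Fin (n+2)) (Fin (n+2)) ℝ) (j : Fin (n+2)) :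
    (twinP n * X) (Fin.last (n+1)) j
      = (Real.sqrt 2)⁻¹ * X ((Fin.last n).castSucc) j
        - (Real.sqrt 2)⁻¹ * X (Fin.last (n+1)) j := by
  rw [Matrix.mul_apply, sumsplit]
  simp [twinP, ne_uV, ne_uV', ne_cl, ne_VV' n, (ne_VV' n).symm]
  ring

lemma mul_twinPT_u {n : ℕ} (X : Matrix (Fin (n+2)) (Fin (n+2)) ℝ) (u : Fin n) (i : Fin (n+2)) :
    (X * (twinP n)ᵀ) i u.castSucc.castSucc = X i u.castSucc.castSucc := by
  rw [Matrix.mul_apply, sumsplit]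
  simp [twinP, ne_uV, ne_uV', ne_cl, (ne_uV u).symm, (ne_uV' u).symm, Fin.castSucc_inj,
    (ne_VV' n).symm, ne_VV' n]

lemma mul_twinPT_V {n : ℕ} (X : Matrix (Fin (n+2)) (Fin (n+2)) ℝ) (i : Fin (n+2)) :
    (X * (twinP n)ᵀ) i ((Fin.last n).castSucc)
      = (Real.sqrt 2)⁻¹ * X i ((Fin.last n).castSucc)
        + (Real.sqrt 2)⁻¹ * X i (Fin.last (n+1)) := by
  rw [Matrix.mul_apply, sumsplit]
  simp [twinP, ne_uV, ne_uV', ne_cl, ne_VV' n]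
  ring

lemma mul_twinPT_V' {n : ℕ} (X : Matrix (Fin (n+2)) (Fin (n+2)) ℝ) (i : Fin (n+2)) :
    (X * (twinP n)ᵀ) i (Fin.last (n+1))
      = (Real.sqrt 2)⁻¹ * X i ((Fin.last n).castSucc)
        - (Real.sqrt 2)⁻¹ * X i (Fin.last (n+1)) := by
  rw [Matrix.mul_apply, sumsplit]
  simp [twinP, ne_uV, ne_uV', ne_cl, ne_VV' n, (ne_VV' n).symm]
  ring

lemma sqrt2_inv_mul_self : (Real.sqrt 2)⁻¹ * (Real.sqrt 2)⁻¹ = (1:ℝ)/2 := by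
  rw [← mul_inv, Real.mul_self_sqrt (by norm_num)]; norm_num

lemma twinP_mul_transpose (n : ℕ) : twinP n * (twinP n)ᵀ = 1 := by
  have h2 := sqrt2_inv_mul_self
  ext i j
  induction i using Fin.lastCases with
  | last =>
    rw [twinP_mul_V']
    induction j using Fin.lastCases with
    | last =>
      simp [twinP, ne_VV' n, (ne_VV' n).symm, Matrix.one_apply]
      try linarith
    | cast j =>
      induction j using Fin.lastCases with
      | last =>
        simp [twinP, ne_VV' n, (ne_VV' n).symm, Matrix.one_apply]
        try linarith
      | cast w =>
        simp [twinP, ne_VV' n, (ne_VV' n).symm, ne_uV w, ne_uV' w, (ne_uV w).symm,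
          (ne_uV' w).symm, Matrix.one_apply]
  | cast i =>
    induction i using Fin.lastCases with
    | last =>
      rw [twinP_mul_V]
      induction j using Fin.lastCases with
      | last =>
        simp [twinP, ne_VV' n, (ne_VV' n).symm, Matrix.one_apply]
        try linarith
      | cast j =>
        induction j using Fin.lastCases with
        | last =>
          simp [twinP, ne_VV' n, (ne_VV' n).symm, Matrix.one_apply]
          try linarith
        | cast w =>
          simp [twinP, ne_VV' n, (ne_VV' n).symm, ne_uV w, ne_uV' w, (ne_uV w).symm,
            (ne_uV' w).symm, Matrix.one_apply]
    | cast u =>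
      rw [twinP_mul_u]
      induction j using Fin.lastCases with
      | last =>
        simp [twinP, ne_uV u, ne_uV' u, (ne_uV u).symm, (ne_uV' u).symm, Matrix.one_apply]
      | cast j =>
        induction j using Fin.lastCases with
        | last =>
          simp [twinP, ne_uV u, ne_uV' u, (ne_uV u).symm, (ne_uV' u).symm, Matrix.one_apply]
        | cast w =>
          simp [twinP, ne_uV u, ne_uV' u, ne_uV w, ne_uV' w, (ne_uV w).symm, (ne_uV' w).symm,
            Matrix.one_apply, Fin.castSucc_inj, eq_comm]

lemma det_twinN {n : ℕ} (A : Matrix (Fin (n+1)) (Fin (n+1)) ℝ) (l x : ℝ) :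
    (x • (1 : Matrix (Fin (n+2)) (Fin (n+2)) ℝ) - twinN n A l).det
      = (x • (1 : Matrix (Fin (n+1)) (Fin (n+1)) ℝ) - A).det * (x + l) := by
  have hB : x • (1 : Matrix (Fin (n+1) ⊕ Fin 1) (Fin (n+1) ⊕ Fin 1) ℝ)
      - Matrix.fromBlocks A 0 0 (Matrix.of fun _ _ : Fin 1 => -l)
      = Matrix.fromBlocks (x • 1 - A) 0 0 (Matrix.of fun _ _ : Fin 1 => x + l) := by
    ext (i|i) (j|j) <;>
      simp [Matrix.one_apply, Matrix.smul_apply, Matrix.sub_apply, Fin.eq_zero]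
  have hsub : x • (1 : Matrix (Fin (n+2)) (Fin (n+2)) ℝ) - twinN n A l
      = (x • (1 : Matrix (Fin (n+1) ⊕ Fin 1) (Fin (n+1) ⊕ Fin 1) ℝ)
          - Matrix.fromBlocks A 0 0 (Matrix.of fun _ _ : Fin 1 => -l)).submatrix
          (finSumFinEquiv (m := n+1) (n := 1)).symm (finSumFinEquiv (m := n+1) (n := 1)).symm := by
    simp [twinN, Matrix.submatrix_sub, Matrix.submatrix_smul, Matrix.submatrix_one_equiv]
  rw [hsub, hB, Matrix.det_submatrix_equiv_self, Matrix.det_fromBlocks_zero₂₁,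
    Matrix.det_fin_one]
  rfl

theorem true_twin_duplication_diag_lambda (n : ℕ) (G : SimpleGraph (Fin (n + 2)))
    (v v' : Fin (n + 2)) (hv : v = (Fin.last n).castSucc) (hv' : v' = Fin.last (n + 1))
    (htwin : G.Adj v v' ∧ ∀ w, w ≠ v → w ≠ v' → (G.Adj v w ↔ G.Adj v' w))
    (Mstar : Matrix (Fin (n + 1)) (Fin (n + 1)) ℝ) (hMstarSymm : Mstar.IsSymm)
    (hMstarS : ∀ i j : Fin (n + 1), i ≠ j →
      (Mstar i j ≠ 0 ↔ G.Adj i.castSucc j.castSucc))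
    (l : ℝ) (hl : l ≠ 0) (hdiag : Mstar (Fin.last n) (Fin.last n) = l)
    (M : Matrix (Fin (n + 2)) (Fin (n + 2)) ℝ) (hMsymm : M.IsSymm)
    (h1 : ∀ u w : Fin n, M u.castSucc.castSucc w.castSucc.castSucc
      = Mstar u.castSucc w.castSucc)
    (h2 : ∀ u : Fin n, M u.castSucc.castSucc v = Mstar u.castSucc (Fin.last n) / Real.sqrt 2)
    (h3 : ∀ u : Fin n, M u.castSucc.castSucc v' = Mstar u.castSucc (Fin.last n) / Real.sqrt 2)
    (h4 : M v v = 0) (h5 : M v' v' = 0) (h6 : M v v' = l) :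
    (∀ i j, i ≠ j → (M i j ≠ 0 ↔ G.Adj i j)) ∧
      spectrum ℝ M = spectrum ℝ Mstar ∪ {-l} := by
  subst hv hv'
  obtain ⟨hadjVV', htw⟩ := htwin
  have hs2 : Real.sqrt 2 ≠ 0 := ne_of_gt (Real.sqrt_pos.mpr (by norm_num))
  constructor
  · -- the pattern
    intro i j hij
    induction i using Fin.lastCases with
    | last =>
      induction j using Fin.lastCases with
      | last => exact absurd rfl hij
      | cast j =>
        induction j using Fin.lastCases with
        | last =>
          rw [hMsymm.apply ((Fin.last n).castSucc) (Fin.last (n+1)), h6]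
          exact iff_of_true hl hadjVV'.symm
        | cast u =>
          rw [hMsymm.apply u.castSucc.castSucc (Fin.last (n+1)), h3,
            div_ne_zero_iff, and_iff_left hs2, hMstarS _ _ (ne_cl _)]
          have := htw u.castSucc.castSucc (ne_uV u) (ne_uV' u)
          exact ⟨fun h => this.mp h.symm, fun h => (this.mpr h).symm⟩
    | cast i =>
      induction i using Fin.lastCases with
      | last =>
        induction j using Fin.lastCases with
        | last =>
          rw [h6]
          exact iff_of_true hl hadjVV'
        | cast j =>
          induction j using Fin.lastCases with
          | last => exact absurd rfl hij
          | cast u =>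
            rw [hMsymm.apply u.castSucc.castSucc ((Fin.last n).castSucc), h2,
              div_ne_zero_iff, and_iff_left hs2, hMstarS _ _ (ne_cl _)]
            exact G.adj_comm _ _
      | cast u =>
        induction j using Fin.lastCases with
        | last =>
          rw [h3, div_ne_zero_iff, and_iff_left hs2, hMstarS _ _ (ne_cl _)]
          have := htw u.castSucc.castSucc (ne_uV u) (ne_uV' u)
          exact ⟨fun h => (this.mp h.symm).symm, fun h => (this.mpr h.symm).symm⟩
        | cast j =>
          induction j using Fin.lastCases with
          | last =>
            rw [h2, div_ne_zero_iff, and_iff_left hs2]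
            exact hMstarS _ _ (ne_cl _)
          | cast w =>
            have hne : u.castSucc ≠ w.castSucc := by
              simpa [Fin.castSucc_inj] using hij
            rw [h1]
            exact hMstarS _ _ hne
  · -- the spectrum
    have hMP : M = twinP n * twinN n Mstar l * (twinP n)ᵀ := by
      ext i j
      induction i using Fin.lastCases with
      | last =>
        induction j using Fin.lastCases with
        | last =>
          rw [mul_twinPT_V', twinP_mul_V', twinP_mul_V', twinN_cc, twinN_cl, twinN_lc,
            twinN_ll, hdiag, h5]
          ring
        | cast j =>
          induction j using Fin.lastCases with
          | last =>
            rw [mul_twinPT_V, twinP_mul_V', twinP_mul_V', twinN_cc, twinN_cl, twinN_lc,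
              twinN_ll, hdiag, hMsymm.apply ((Fin.last n).castSucc) (Fin.last (n+1)), h6]
            linear_combination (-2*l) * sqrt2_inv_mul_self
          | cast w =>
            rw [mul_twinPT_u, twinP_mul_V', twinN_cc, twinN_lc,
              hMsymm.apply w.castSucc.castSucc (Fin.last (n+1)), h3,
              hMstarSymm.apply w.castSucc (Fin.last n), div_eq_mul_inv]
            ring
      | cast i =>
        induction i using Fin.lastCases with
        | last =>
          induction j using Fin.lastCases with
          | last =>
            rw [mul_twinPT_V', twinP_mul_V, twinP_mul_V, twinN_cc, twinN_cl, twinN_lc,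
              twinN_ll, hdiag, h6]
            linear_combination (-2*l) * sqrt2_inv_mul_self
          | cast j =>
            induction j using Fin.lastCases with
            | last =>
              rw [mul_twinPT_V, twinP_mul_V, twinP_mul_V, twinN_cc, twinN_cl, twinN_lc,
                twinN_ll, hdiag, h4]
              ring
            | cast w =>
              rw [mul_twinPT_u, twinP_mul_V, twinN_cc, twinN_lc,
                hMsymm.apply w.castSucc.castSucc ((Fin.last n).castSucc), h2,
                hMstarSymm.apply w.castSucc (Fin.last n), div_eq_mul_inv]
              ring
        | cast u =>
          induction j using Fin.lastCases with
          | last =>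
            rw [mul_twinPT_V', twinP_mul_u, twinP_mul_u, twinN_cc, twinN_cl, h3,
              div_eq_mul_inv]
            ring
          | cast j =>
            induction j using Fin.lastCases with
            | last =>
              rw [mul_twinPT_V, twinP_mul_u, twinP_mul_u, twinN_cc, twinN_cl, h2,
                div_eq_mul_inv]
              ring
            | cast w =>
              rw [mul_twinPT_u, twinP_mul_u, twinN_cc, h1]
    have hPP := twinP_mul_transpose n
    have hdetkey : ∀ x : ℝ, (x • (1 : Matrix (Fin (n+2)) (Fin (n+2)) ℝ) - M).det
        = (x • (1 : Matrix (Fin (n+1)) (Fin (n+1)) ℝ) - Mstar).det * (x + l) := by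
      intro x
      have hconj : x • (1 : Matrix (Fin (n+2)) (Fin (n+2)) ℝ) - M
          = twinP n * (x • 1 - twinN n Mstar l) * (twinP n)ᵀ := by
        rw [hMP, Matrix.mul_sub, Matrix.sub_mul, Matrix.mul_smul, Matrix.mul_one,
          Matrix.smul_mul, hPP]
      rw [hconj, Matrix.det_mul, Matrix.det_mul, det_twinN]
      have hdet1 : (twinP n).det * (twinP n)ᵀ.det = 1 := by
        rw [← Matrix.det_mul, hPP, Matrix.det_one]
      rw [mul_right_comm, hdet1, one_mul]
    ext x
    simp only [Set.mem_union, Set.mem_singleton_iff, spectrum.mem_iff,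
      Matrix.isUnit_iff_isUnit_det, isUnit_iff_ne_zero, not_not,
      Algebra.algebraMap_eq_smul_one]
    rw [hdetkey x, mul_eq_zero, add_eq_zero_iff_eq_neg]
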